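/- Let G and H be positive definite Hermitian n×n complex matrices with trace(G⁻¹H) = n and det H = det G. Then H = G. -/

import Mathlib

open scoped ComplexOrder
open scoped Matrix
open scoped MatrixOrder

lemma amgm_eq_one {n : ℕ} (μ : Fin n → ℝ) (hpos : ∀ i, 0 < μ i)
    (hsum : ∑ i, μ i = n) (hprod : ∏ i, μ i = 1) : ∀ i, μ i = 1 := by
  have hlogsum : ∑ i, Real.log (μ i) = 0 := by
    rw [← Real.log_prod fun i _ => (hpos i).ne', hprod, Real.log_one]
  have hsum2 : ∑ i, (μ i - 1) = 0 := by
    simp [Finset.sum_sub_distrib, hsum]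
  have hle : ∀ i ∈ Finset.univ, Real.log (μ i) ≤ μ i - 1 :=
    fun i _ => Real.log_le_sub_one_of_pos (hpos i)
  have heq : ∀ i ∈ Finset.univ, Real.log (μ i) = μ i - 1 :=
    (Finset.sum_eq_sum_iff_of_le hle).mp (by rw [hlogsum, hsum2])
  intro i
  by_contra h
  exact absurd (heq i (Finset.mem_univ i)) (Real.log_lt_sub_one_of_pos (hpos i) h).ne

lemma posdef_conj {n : ℕ} {A B : Matrix (Fin n) (Fin n) ℂ} (hA : A.PosDef)
    (hB : IsUnit B) : (Bᴴ * A * B).PosDef := by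
  exact hA.conjTranspose_mul_mul_same (Matrix.mulVec_injective_iff_isUnit.mpr hB)

lemma trace_eq_sum_eigenvalues {n : ℕ} {A : Matrix (Fin n) (Fin n) ℂ}
    (hA : A.IsHermitian) : A.trace = ∑ i, (hA.eigenvalues i : ℂ) := by
  exact hA.trace_eq_sum_eigenvalues

theorem stmt_3 (n : ℕ) (G H : Matrix (Fin n) (Fin n) ℂ)
    (hG : G.PosDef) (hH : H.PosDef)
    (htr : (G⁻¹ * H).trace = (n : ℂ)) (hdet : H.det = G.det) :
    H = G := by
  -- square root of G
  set S := CFC.sqrt G with hSdef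
  have hSH : S.IsHermitian := (Matrix.nonneg_iff_posSemidef.mp (CFC.sqrt_nonneg G)).1
  have hSS : S * S = G := CFC.sqrt_mul_sqrt_self G hG.posSemidef.nonneg
  have hdetS : S.det ≠ 0 := by
    intro h
    have : G.det = 0 := by rw [← hSS, Matrix.det_mul, h, mul_zero]
    exact hG.det_pos.ne' this
  have hSunit : IsUnit S := (Matrix.isUnit_iff_isUnit_det S).mpr hdetS.isUnit
  have hSinvH : (S⁻¹)ᴴ = S⁻¹ := by rw [Matrix.conjTranspose_nonsing_inv, hSH.eq]
  have hSinvUnit : IsUnit S⁻¹ := (Matrix.isUnit_nonsing_inv_iff).mpr hSunit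
  set M := S⁻¹ * H * S⁻¹ with hMdef
  have hM : M.PosDef := by
    have := posdef_conj hH hSinvUnit
    rwa [hSinvH] at this
  -- trace of M
  have hGinv : G⁻¹ = S⁻¹ * S⁻¹ := by rw [← hSS, Matrix.mul_inv_rev]
  have htrM : M.trace = (n : ℂ) := by
    rw [hMdef, Matrix.trace_mul_comm, ← Matrix.mul_assoc, ← hGinv]
    exact htr
  -- det of M
  have hdetM : M.det = 1 := by
    rw [hMdef, Matrix.det_mul, Matrix.det_mul, Matrix.det_nonsing_inv, hdet, ← hSS,
      Matrix.det_mul]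
    field_simp [Ring.inverse_eq_inv]
    rw [← mul_pow, Ring.inverse_mul_cancel _ hdetS.isUnit, one_pow]
  -- eigenvalues
  have hμsum : ∑ i, hM.1.eigenvalues i = n := by
    have h1 := trace_eq_sum_eigenvalues hM.1
    rw [htrM] at h1
    exact_mod_cast h1.symm
  have hμprod : ∏ i, hM.1.eigenvalues i = 1 := by
    have h1 := hM.1.det_eq_prod_eigenvalues
    rw [hdetM] at h1
    refine RCLike.ofReal_injective (K := ℂ) ?_
    push_cast
    rw [← h1]
  have hμone : ∀ i, hM.1.eigenvalues i = 1 :=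
    amgm_eq_one _ hM.eigenvalues_pos hμsum hμprod
  -- M = 1
  have hMone : M = 1 := by
    conv_lhs => rw [hM.1.spectral_theorem, Unitary.conjStarAlgAut_apply]
    have hdiag : (RCLike.ofReal ∘ hM.1.eigenvalues : Fin n → ℂ) = fun _ => 1 := by
      funext i
      simp [Function.comp, hμone i]
    rw [hdiag, Matrix.diagonal_one, mul_one]
    exact Matrix.mem_unitaryGroup_iff.mp (Matrix.IsHermitian.eigenvectorUnitary hM.1).2
  -- conclude
  have : S * M * S = S * 1 * S := by rw [hMone]
  rw [hMdef] at this
  rw [Matrix.mul_assoc, Matrix.mul_assoc, Matrix.nonsing_inv_mul _ hdetS.isUnit, mul_one,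
    ← Matrix.mul_assoc, Matrix.mul_nonsing_inv _ hdetS.isUnit, one_mul] at this
  rw [this, mul_one, hSS]
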